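/- Let ℓ≥1, let J be a real invertible 2ℓ×2ℓ matrix with Jᵀ=−J, and let DK be a real 2ℓ×ℓ matrix such that DKᵀDK is invertible and DKᵀJDK=0 (isotropy). Set N=(DKᵀDK)⁻¹ and let M=[DK | J⁻¹DK N] be the 2ℓ×2ℓ matrix whose first ℓ columns are those of DK and whose last ℓ columns are those of J⁻¹DKN. Then, in ℓ×ℓ block form, MᵀJM = [[0, I_ℓ],[−I_ℓ, −NᵀDKᵀJ⁻¹DKN]]; in particular MᵀJM and M are invertible, and (MᵀJM)⁻¹ = [[−NᵀDKᵀJ⁻¹DKN, −I_ℓ],[I_ℓ, 0]]. -/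

import Mathlib

open Matrix

noncomputable section

/-- Lemma `isinvariant` (finite-dimensional linear algebra): for an antisymmetric invertible
`J`, an isotropic `DK` with invertible Gram matrix, the frame
`M = [DK | J⁻¹ DK N]`, `N = (DKᵀDK)⁻¹`, satisfies, in `ℓ×ℓ` block form,
`MᵀJM = [[0, I],[−I, −NᵀDKᵀJ⁻¹DKN]]`; in particular `MᵀJM` and `M` are invertible and
`(MᵀJM)⁻¹ = [[−NᵀDKᵀJ⁻¹DKN, −I],[I, 0]]`. -/
theorem center_frame_inverse
    (ℓ : ℕ) (hℓ : 1 ≤ ℓ)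
    (J : Matrix (Fin (2 * ℓ)) (Fin (2 * ℓ)) ℝ)
    (hJdet : IsUnit J.det) (hJanti : Jᵀ = -J)
    (DK : Matrix (Fin (2 * ℓ)) (Fin ℓ) ℝ)
    (hGram : IsUnit (DKᵀ * DK).det)
    (hiso : DKᵀ * J * DK = 0) :
    let N : Matrix (Fin ℓ) (Fin ℓ) ℝ := (DKᵀ * DK)⁻¹
    let M : Matrix (Fin (2 * ℓ)) (Fin ℓ ⊕ Fin ℓ) ℝ :=
      Matrix.fromCols DK (J⁻¹ * DK * N)
    let B : Matrix (Fin ℓ) (Fin ℓ) ℝ := Nᵀ * DKᵀ * J⁻¹ * DK * N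
    Mᵀ * J * M = Matrix.fromBlocks 0 1 (-1) (-B) ∧
      (Mᵀ * J * M) * Matrix.fromBlocks (-B) (-1) 1 0 = 1 ∧
      Matrix.fromBlocks (-B) (-1) 1 0 * (Mᵀ * J * M) = 1 ∧
      ∃ M' : Matrix (Fin ℓ ⊕ Fin ℓ) (Fin (2 * ℓ)) ℝ, M' * M = 1 ∧ M * M' = 1 := by
  intro N M B
  have hGN : (DKᵀ * DK) * N = 1 := Matrix.mul_nonsing_inv _ hGram
  have hNG : N * (DKᵀ * DK) = 1 := Matrix.nonsing_inv_mul _ hGram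
  have hNsymm : Nᵀ = N := by
    show ((DKᵀ * DK)⁻¹)ᵀ = (DKᵀ * DK)⁻¹
    rw [Matrix.transpose_nonsing_inv, Matrix.transpose_mul, Matrix.transpose_transpose]
  have hJJ : J * J⁻¹ = 1 := Matrix.mul_nonsing_inv _ hJdet
  have hJiT : J⁻¹ᵀ = -J⁻¹ := by
    rw [Matrix.transpose_nonsing_inv, hJanti]
    exact Matrix.inv_eq_right_inv (by rw [Matrix.neg_mul, Matrix.mul_neg, neg_neg, hJJ])
  have hMT : Mᵀ = Matrix.fromRows DKᵀ (Nᵀ * DKᵀ * J⁻¹ᵀ) := by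
    show (Matrix.fromCols DK (J⁻¹ * DK * N))ᵀ = _
    rw [Matrix.transpose_fromCols]
    congr 1
    rw [Matrix.transpose_mul, Matrix.transpose_mul, Matrix.mul_assoc]
  have hJiTJ : J⁻¹ᵀ * J = -1 := by
    rw [hJiT, Matrix.neg_mul, Matrix.nonsing_inv_mul _ hJdet]
  have key : Mᵀ * J * M = Matrix.fromBlocks 0 1 (-1) (-B) := by
    show Mᵀ * J * Matrix.fromCols DK (J⁻¹ * DK * N) = _
    have h12 : DKᵀ * J * (J⁻¹ * DK * N) = 1 := by
      rw [show DKᵀ * J * (J⁻¹ * DK * N) = DKᵀ * (J * J⁻¹) * DK * N by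
        simp only [Matrix.mul_assoc], hJJ, Matrix.mul_one, hGN]
    have h21 : Nᵀ * DKᵀ * J⁻¹ᵀ * J * DK = -1 := by
      rw [show Nᵀ * DKᵀ * J⁻¹ᵀ * J * DK = Nᵀ * DKᵀ * (J⁻¹ᵀ * J) * DK by
        simp only [Matrix.mul_assoc], hJiTJ, Matrix.mul_neg, Matrix.mul_one,
        Matrix.neg_mul, hNsymm, Matrix.mul_assoc, hNG]
    have h22 : Nᵀ * DKᵀ * J⁻¹ᵀ * J * (J⁻¹ * DK * N) = -B := by
      rw [show Nᵀ * DKᵀ * J⁻¹ᵀ * J * (J⁻¹ * DK * N)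
          = Nᵀ * DKᵀ * J⁻¹ᵀ * (J * J⁻¹) * DK * N by simp only [Matrix.mul_assoc],
        hJJ, Matrix.mul_one, hJiT, Matrix.mul_neg, Matrix.neg_mul, Matrix.neg_mul]
    rw [hMT, Matrix.fromRows_mul, Matrix.fromRows_mul_fromCols, hiso, h12, h21, h22]
  have hCC : Matrix.fromBlocks (0 : Matrix (Fin ℓ) (Fin ℓ) ℝ) 1 (-1) (-B) *
      Matrix.fromBlocks (-B) (-1) 1 0 = 1 := by
    rw [Matrix.fromBlocks_multiply]
    simp [← Matrix.fromBlocks_one]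
  have hCC' : Matrix.fromBlocks (-B) (-1) 1 (0 : Matrix (Fin ℓ) (Fin ℓ) ℝ) *
      Matrix.fromBlocks 0 1 (-1) (-B) = 1 := by
    rw [Matrix.fromBlocks_multiply]
    simp [← Matrix.fromBlocks_one]
  refine ⟨key, by rw [key]; exact hCC, by rw [key]; exact hCC', ?_⟩
  refine ⟨(Matrix.fromBlocks (-B) (-1) 1 0 : Matrix (Fin ℓ ⊕ Fin ℓ) (Fin ℓ ⊕ Fin ℓ) ℝ) * (Mᵀ * J), ?_, ?_⟩
  · rw [Matrix.mul_assoc, key]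
    exact hCC'
  · have e : Fin ℓ ⊕ Fin ℓ ≃ Fin (2 * ℓ) := finSumFinEquiv.trans (finCongr (two_mul ℓ).symm)
    refine (Matrix.mul_eq_one_comm_of_equiv e).mp ?_
    rw [Matrix.mul_assoc, key]
    exact hCC'
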